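/- Let G be a graph with β(L,R) ≤ θ < 1 for some pair subgraph U = (L,R). Then for every integer t ≥ 0 there exists a vertex v ∈ U such that |χ_v Mᵗ|(U) ≥ (2-2θ)ᵗ, where χ_v is the indicator vector of v, M = I - D⁻¹A, and |p|(U) = Σ_{u∈U} |p(u)|. -/

import Mathlib

open Finset Matrix

lemma seq_growth_aux (a : ℕ → ℝ) (c : ℝ) (hc : 0 < c) (h0 : 0 < a 0)
    (h1 : c * a 0 ≤ a 1) (hcs : ∀ t, (a (t+1))^2 ≤ a t * a (t+2)) :
    ∀ t, c ^ t * a 0 ≤ a t := by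
  have key : ∀ t, c ^ t * a 0 ≤ a t ∧ c * a t ≤ a (t+1) := by
    intro t
    induction t with
    | zero => exact ⟨by simp, h1⟩
    | succ n ih =>
      obtain ⟨h2, h3⟩ := ih
      have hpos : 0 < c ^ n * a 0 := by positivity
      have hat : 0 < a n := lt_of_lt_of_le hpos h2
      have h4 : c ^ (n+1) * a 0 ≤ a (n+1) := by
        have hc' : c * (c ^ n * a 0) ≤ c * a n :=
          mul_le_mul_of_nonneg_left h2 hc.le
        calc c ^ (n+1) * a 0 = c * (c ^ n * a 0) := by ring
          _ ≤ c * a n := hc'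
          _ ≤ a (n+1) := h3
      have han1 : 0 < a (n+1) := lt_of_lt_of_le (by positivity) h4
      refine ⟨h4, ?_⟩
      have hcs' := hcs n
      nlinarith [mul_nonneg han1.le (by linarith : (0:ℝ) ≤ a (n+1) - c * a n)]
  exact fun t => (key t).1

lemma symm_dot_aux {V : Type*} [Fintype V] (S : Matrix V V ℝ) (hS : Sᵀ = S)
    (x y : V → ℝ) : x ⬝ᵥ (S *ᵥ y) = (S *ᵥ x) ⬝ᵥ y := by
  rw [dotProduct_mulVec, ← vecMul_transpose, hS]

theorem exists_vertex_mass_ge {V : Type*} [Fintype V] [DecidableEq V]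
    (A : Matrix V V ℝ) (hA : A.IsSymm) (hA0 : ∀ v u, 0 ≤ A v u)
    (d : V → ℝ) (hd : ∀ v, d v = ∑ u, A v u) (hd0 : ∀ v, 0 < d v)
    (M : Matrix V V ℝ)
    (hM : ∀ v u, M v u = (if v = u then 1 else 0) - A v u / d v)
    (L R : Finset V) (hLR : Disjoint L R)
    (volU : ℝ) (hvolU : volU = ∑ v ∈ L ∪ R, d v) (hvolU0 : 0 < volU)
    (eL eR eOut : ℝ)
    (heL : eL = (∑ u ∈ L, ∑ v ∈ L, A u v) / 2)
    (heR : eR = (∑ u ∈ R, ∑ v ∈ R, A u v) / 2)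
    (heOut : eOut = ∑ u ∈ L ∪ R, ∑ v ∈ (L ∪ R)ᶜ, A u v)
    (θ : ℝ) (hθ : θ < 1)
    (hβ : (2 * eL + 2 * eR + eOut) / volU ≤ θ) :
    ∀ t : ℕ, ∃ v ∈ L ∪ R,
      (2 - 2 * θ) ^ t ≤ ∑ u ∈ L ∪ R, |((Pi.single v (1 : ℝ)) ᵥ* M ^ t) u| := by
  intro t
  set U : Finset V := L ∪ R with hU
  set c : ℝ := 2 - 2 * θ with hc_def
  have hc : 0 < c := by rw [hc_def]; linarith
  -- square roots of degrees
  set e : V → ℝ := fun v => Real.sqrt (d v) with he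
  have he0 : ∀ v, 0 < e v := fun v => Real.sqrt_pos.2 (hd0 v)
  have hee : ∀ v, e v * e v = d v := fun v => Real.mul_self_sqrt (hd0 v).le
  -- signs
  set σ : V → ℝ := fun v => if v ∈ L then 1 else if v ∈ R then -1 else 0 with hσ
  have hσL : ∀ v ∈ L, σ v = 1 := by intro v hv; simp [hσ, hv]
  have hσR : ∀ v ∈ R, σ v = -1 := by
    intro v hv
    have hvL : v ∉ L := Finset.disjoint_right.mp hLR hv
    simp [hσ, hv, hvL]
  have hσ0 : ∀ v, v ∉ U → σ v = 0 := by
    intro v hv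
    rw [hU, Finset.mem_union] at hv
    push_neg at hv
    simp [hσ, hv.1, hv.2]
  have hσ2 : ∀ v ∈ U, σ v * σ v = 1 := by
    intro v hv
    rw [hU, Finset.mem_union] at hv
    rcases hv with hv | hv
    · rw [hσL v hv]; norm_num
    · rw [hσR v hv]; norm_num
  have hσabs : ∀ v ∈ U, |σ v| = 1 := by
    intro v hv
    rw [hU, Finset.mem_union] at hv
    rcases hv with hv | hv
    · rw [hσL v hv]; norm_num
    · rw [hσR v hv]; norm_num
  set w : V → ℝ := fun v => σ v * e v with hw
  have hw0 : ∀ v, v ∉ U → w v = 0 := by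
    intro v hv; rw [hw]; simp only; rw [hσ0 v hv, zero_mul]
  -- the symmetric normalized matrix
  set N : Matrix V V ℝ := Matrix.of fun v u => (if v = u then 1 else 0) - A v u / (e v * e u)
    with hN
  have hNapp : ∀ v u, N v u = (if v = u then 1 else 0) - A v u / (e v * e u) := fun v u => rfl
  have hNsymm : Nᵀ = N := by
    ext v u
    rw [transpose_apply, hNapp, hNapp, hA.apply v u, mul_comm (e u) (e v)]
    congr 1
    by_cases h : u = v
    · rw [if_pos h, if_pos h.symm]
    · rw [if_neg h, if_neg (Ne.symm h)]
  have hMrel : ∀ k u, M k u * e k = N k u * e u := by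
    intro k u
    rw [hM, hNapp]
    by_cases h : k = u
    · subst h
      rw [if_pos rfl, hee]
    · rw [if_neg h, ← hee k]
      have h1 := (he0 k).ne'
      have h2 := (he0 u).ne'
      field_simp
      ring
  have hMN : ∀ t : ℕ, ∀ v u, (M ^ t) v u * e v = (N ^ t) v u * e u := by
    intro t
    induction t with
    | zero =>
      intro v u
      simp only [pow_zero, one_apply]
      by_cases h : v = u
      · subst h; rfl
      · simp [h]
    | succ n ih =>
      intro v u
      rw [pow_succ, pow_succ, mul_apply, mul_apply, Finset.sum_mul, Finset.sum_mul]
      apply Finset.sum_congr rfl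
      intro k _
      calc (M ^ n) v k * M k u * e v = ((M ^ n) v k * e v) * M k u := by ring
        _ = ((N ^ n) v k * e k) * M k u := by rw [ih v k]
        _ = (N ^ n) v k * (M k u * e k) := by ring
        _ = (N ^ n) v k * (N k u * e u) := by rw [hMrel k u]
        _ = (N ^ n) v k * N k u * e u := by ring
  -- expansion of quadratic form
  have expand : ∀ x : V → ℝ, x ⬝ᵥ (N *ᵥ x)
      = (∑ v, (x v)^2) - ∑ v, ∑ u, A v u * ((x v / e v) * (x u / e u)) := by
    intro x
    have step : ∀ v, x v * ((N *ᵥ x) v)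
        = (x v)^2 - ∑ u, A v u * ((x v / e v) * (x u / e u)) := by
      intro v
      have : (N *ᵥ x) v = ∑ u, N v u * x u := rfl
      rw [this, Finset.mul_sum]
      have hterm : ∀ u, x v * (N v u * x u)
          = (if v = u then x v * x u else 0) - A v u * ((x v / e v) * (x u / e u)) := by
        intro u
        rw [hNapp]
        have h1 := (he0 v).ne'
        have h2 := (he0 u).ne'
        by_cases h : v = u
        · rw [if_pos h, if_pos h]
          field_simp
        · rw [if_neg h, if_neg h]
          field_simp
          ring
      rw [Finset.sum_congr rfl (fun u _ => hterm u), Finset.sum_sub_distrib,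
        Finset.sum_ite_eq, if_pos (Finset.mem_univ v)]
      ring
    calc x ⬝ᵥ (N *ᵥ x) = ∑ v, x v * ((N *ᵥ x) v) := rfl
      _ = ∑ v, ((x v)^2 - ∑ u, A v u * ((x v / e v) * (x u / e u))) :=
          Finset.sum_congr rfl (fun v _ => step v)
      _ = _ := by rw [Finset.sum_sub_distrib]
  have hrow : ∀ v, (x : V → ℝ) → (x v)^2 = ∑ u, A v u * (x v / e v)^2 := by
    intro v x
    rw [← Finset.sum_mul, ← hd v, ← hee v]
    have h1 := (he0 v).ne'
    field_simp
  have hcol : ∀ x : V → ℝ, ∑ v, ∑ u, A v u * (x u / e u)^2 = ∑ v, (x v)^2 := by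
    intro x
    rw [Finset.sum_comm]
    apply Finset.sum_congr rfl
    intro u _
    have : ∑ v, A v u * (x u / e u)^2 = (∑ v, A u v) * (x u / e u)^2 := by
      rw [Finset.sum_mul]
      exact Finset.sum_congr rfl (fun v _ => by rw [hA.apply u v])
    rw [this, ← hd u, ← hee u]
    have h1 := (he0 u).ne'
    field_simp
  have hQFnn : ∀ x : V → ℝ, 0 ≤ x ⬝ᵥ (N *ᵥ x) := by
    intro x
    have h2 : (∑ v, (x v)^2) = ∑ v, ∑ u, A v u * (x v / e v)^2 :=
      Finset.sum_congr rfl (fun v _ => hrow v x)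
    have key : x ⬝ᵥ (N *ᵥ x) = ∑ v, ∑ u, A v u * (x v / e v - x u / e u)^2 / 2 := by
      calc x ⬝ᵥ (N *ᵥ x)
          = (∑ v, ∑ u, A v u * (x v / e v)^2) / 2 + (∑ v, ∑ u, A v u * (x u / e u)^2) / 2
            - ∑ v, ∑ u, A v u * ((x v / e v) * (x u / e u)) := by
            rw [expand x, hcol x, ← h2]; ring
        _ = ∑ v, ∑ u, (A v u * (x v / e v)^2 / 2 + A v u * (x u / e u)^2 / 2
            - A v u * ((x v / e v) * (x u / e u))) := by
            simp only [Finset.sum_div, ← Finset.sum_add_distrib, ← Finset.sum_sub_distrib]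
        _ = _ := by
            apply Finset.sum_congr rfl; intro v _
            apply Finset.sum_congr rfl; intro u _
            ring
    rw [key]
    apply Finset.sum_nonneg; intro v _
    apply Finset.sum_nonneg; intro u _
    have := hA0 v u
    positivity
  have hNpsd : N.PosSemidef := by
    refine Matrix.PosSemidef.of_dotProduct_mulVec_nonneg ?_ ?_
    · rw [Matrix.IsHermitian, conjTranspose_eq_transpose_of_trivial, hNsymm]
    · intro x
      simpa using hQFnn x
  -- square root
  open scoped MatrixOrder in set Q : Matrix V V ℝ := CFC.sqrt N with hQdef
  have hQpsd : Q.PosSemidef := by open scoped MatrixOrder in exact (CFC.sqrt_nonneg N).posSemidef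
  have hQsymm : Qᵀ = Q := by
    rw [← conjTranspose_eq_transpose_of_trivial, hQpsd.1]
  have hQsq : Q * Q = N := by open scoped MatrixOrder in exact CFC.sqrt_mul_sqrt_self N hNpsd.nonneg
  have hQpow_symm : ∀ s : ℕ, (Q ^ s)ᵀ = Q ^ s := by
    intro s; rw [transpose_pow, hQsymm]
  have hNpow : ∀ s : ℕ, N ^ s = Q ^ s * Q ^ s := by
    intro s
    rw [← pow_add]
    have : N = Q ^ 2 := by rw [sq, hQsq]
    rw [this, ← pow_mul]
    congr 1
    ring
  -- the potential sequence
  set a : ℕ → ℝ := fun s => w ⬝ᵥ ((N ^ s) *ᵥ w) with ha_def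
  have ha_dot : ∀ s : ℕ, a s = (Q ^ s *ᵥ w) ⬝ᵥ (Q ^ s *ᵥ w) := by
    intro s
    rw [ha_def]
    simp only
    rw [hNpow s, ← mulVec_mulVec, symm_dot_aux _ (hQpow_symm s)]
  have hCS : ∀ s : ℕ, (a (s+1))^2 ≤ a s * a (s+2) := by
    intro s
    have h1 : a (s+1) = (Q ^ s *ᵥ w) ⬝ᵥ (Q ^ (s+2) *ᵥ w) := by
      rw [ha_def]
      simp only
      have : N ^ (s+1) = Q ^ s * Q ^ (s+2) := by
        rw [hNpow (s+1), ← pow_add, ← pow_add]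
        congr 1
        ring
      rw [this, ← mulVec_mulVec, symm_dot_aux _ (hQpow_symm s)]
    set p : V → ℝ := Q ^ s *ᵥ w with hp
    set q : V → ℝ := Q ^ (s+2) *ᵥ w with hq
    have h2 : a s = ∑ i, (p i)^2 := by
      rw [ha_dot s, ← hp]
      simp [dotProduct, sq]
    have h3 : a (s+2) = ∑ i, (q i)^2 := by
      rw [ha_dot (s+2), ← hq]
      simp [dotProduct, sq]
    rw [h1, h2, h3]
    exact Finset.sum_mul_sq_le_sq_mul_sq Finset.univ p q
  -- restriction to U
  have ha_restrict : ∀ s : ℕ, a s = ∑ v ∈ U, ∑ u ∈ U, σ v * σ u * (d v * (M ^ s) v u) := by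
    intro s
    have h1 : a s = ∑ v, w v * ∑ u, (N ^ s) v u * w u := by
      simp only [ha_def, dotProduct, mulVec]
    have h2 : ∀ v, w v * ∑ u, (N ^ s) v u * w u = ∑ u ∈ U, w v * ((N ^ s) v u * w u) := by
      intro v
      rw [Finset.mul_sum]
      refine (Finset.sum_subset (Finset.subset_univ U) ?_).symm
      intro u _ hu
      rw [hw0 u hu, mul_zero, mul_zero]
    have h3 : a s = ∑ v ∈ U, ∑ u ∈ U, w v * ((N ^ s) v u * w u) := by
      rw [h1, Finset.sum_congr rfl (fun v _ => h2 v)]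
      refine (Finset.sum_subset (Finset.subset_univ U) ?_).symm
      intro v _ hv
      apply Finset.sum_eq_zero
      intro u _
      rw [hw0 v hv, zero_mul]
    rw [h3]
    apply Finset.sum_congr rfl; intro v _
    apply Finset.sum_congr rfl; intro u _
    rw [hw]
    simp only
    calc σ v * e v * ((N ^ s) v u * (σ u * e u))
        = σ v * σ u * (e v * ((N ^ s) v u * e u)) := by ring
      _ = σ v * σ u * (e v * ((M ^ s) v u * e v)) := by rw [← hMN s v u]
      _ = σ v * σ u * ((e v * e v) * (M ^ s) v u) := by ring
      _ = σ v * σ u * (d v * (M ^ s) v u) := by rw [hee v]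
  -- initial values
  have ha0 : a 0 = volU := by
    rw [ha_restrict 0, hvolU]
    apply Finset.sum_congr rfl
    intro v hv
    have hterm : ∀ u, σ v * σ u * (d v * (M ^ 0) v u)
        = if v = u then σ v * σ u * d v else 0 := by
      intro u
      rw [pow_zero, one_apply]
      by_cases h : v = u
      · rw [if_pos h, if_pos h]; ring
      · rw [if_neg h, if_neg h]; ring
    rw [Finset.sum_congr rfl (fun u _ => hterm u), Finset.sum_ite_eq, if_pos hv,
      hσ2 v hv, one_mul]
  have ha1 : c * volU ≤ a 1 := by
    have hsplit : a 1 = volU - ∑ v ∈ U, ∑ u ∈ U, σ v * σ u * A v u := by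
      rw [ha_restrict 1, hvolU, ← Finset.sum_sub_distrib]
      apply Finset.sum_congr rfl
      intro v hv
      have hterm : ∀ u, σ v * σ u * (d v * (M ^ 1) v u)
          = (if v = u then σ v * σ u * d v else 0) - σ v * σ u * A v u := by
        intro u
        rw [pow_one, hM]
        have h3 := (hd0 v).ne'
        by_cases h : v = u
        · rw [if_pos h, if_pos h]
          field_simp
        · rw [if_neg h, if_neg h]
          field_simp
          ring
      rw [Finset.sum_congr rfl (fun u _ => hterm u), Finset.sum_sub_distrib,
        Finset.sum_ite_eq, if_pos hv, hσ2 v hv, one_mul]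
    -- split the quadratic sum over L and R
    have hinnerL : ∀ v ∈ L, ∑ u ∈ U, σ v * σ u * A v u
        = (∑ u ∈ L, A v u) - ∑ u ∈ R, A v u := by
      intro v hv
      rw [hU, Finset.sum_union hLR]
      have l1 : ∑ u ∈ L, σ v * σ u * A v u = ∑ u ∈ L, A v u :=
        Finset.sum_congr rfl fun u hu => by rw [hσL v hv, hσL u hu]; ring
      have l2 : ∑ u ∈ R, σ v * σ u * A v u = ∑ u ∈ R, -A v u :=
        Finset.sum_congr rfl fun u hu => by rw [hσL v hv, hσR u hu]; ring
      rw [l1, l2, Finset.sum_neg_distrib, sub_eq_add_neg]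
    have hinnerR : ∀ v ∈ R, ∑ u ∈ U, σ v * σ u * A v u
        = (∑ u ∈ R, A v u) - ∑ u ∈ L, A v u := by
      intro v hv
      rw [hU, Finset.sum_union hLR]
      have l1 : ∑ u ∈ L, σ v * σ u * A v u = ∑ u ∈ L, -A v u :=
        Finset.sum_congr rfl fun u hu => by rw [hσR v hv, hσL u hu]; ring
      have l2 : ∑ u ∈ R, σ v * σ u * A v u = ∑ u ∈ R, A v u :=
        Finset.sum_congr rfl fun u hu => by rw [hσR v hv, hσR u hu]; ring
      rw [l1, l2, Finset.sum_neg_distrib]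
      ring
    have hQsum : ∑ v ∈ U, ∑ u ∈ U, σ v * σ u * A v u
        = ((∑ v ∈ L, ∑ u ∈ L, A v u) - ∑ v ∈ L, ∑ u ∈ R, A v u)
          + ((∑ v ∈ R, ∑ u ∈ R, A v u) - ∑ v ∈ R, ∑ u ∈ L, A v u) := by
      rw [hU, Finset.sum_union hLR,
        Finset.sum_congr rfl (fun v hv => hinnerL v hv),
        Finset.sum_congr rfl (fun v hv => hinnerR v hv),
        Finset.sum_sub_distrib, Finset.sum_sub_distrib]
    have hSRL : ∑ v ∈ R, ∑ u ∈ L, A v u = ∑ v ∈ L, ∑ u ∈ R, A v u := by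
      refine Finset.sum_comm.trans ?_
      apply Finset.sum_congr rfl; intro v _
      apply Finset.sum_congr rfl; intro u _
      exact hA.apply v u
    have hvol_decomp : volU = (∑ v ∈ U, ∑ u ∈ U, A v u) + eOut := by
      rw [hvolU, heOut, ← Finset.sum_add_distrib]
      apply Finset.sum_congr rfl
      intro v _
      rw [hd v, Finset.sum_add_sum_compl U (fun u => A v u)]
    have hSUU : ∑ v ∈ U, ∑ u ∈ U, A v u
        = (∑ v ∈ L, ∑ u ∈ L, A v u) + (∑ v ∈ L, ∑ u ∈ R, A v u)
          + ((∑ v ∈ R, ∑ u ∈ L, A v u) + ∑ v ∈ R, ∑ u ∈ R, A v u) := by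
      rw [hU, Finset.sum_union hLR]
      congr 1
      · rw [← Finset.sum_add_distrib]
        exact Finset.sum_congr rfl fun v _ => Finset.sum_union hLR
      · rw [← Finset.sum_add_distrib]
        exact Finset.sum_congr rfl fun v _ => Finset.sum_union hLR
    have heOut0 : 0 ≤ eOut := by
      rw [heOut]
      apply Finset.sum_nonneg; intro v _
      apply Finset.sum_nonneg; intro u _
      exact hA0 v u
    have hβ' : 2 * eL + 2 * eR + eOut ≤ θ * volU := by
      rw [div_le_iff₀ hvolU0] at hβ
      linarith
    have heL' : 2 * eL = ∑ v ∈ L, ∑ u ∈ L, A v u := by rw [heL]; ring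
    have heR' : 2 * eR = ∑ v ∈ R, ∑ u ∈ R, A v u := by rw [heR]; ring
    rw [hsplit, hQsum, hc_def]
    nlinarith [hSRL, hvol_decomp, hSUU, heOut0, hβ', heL', heR']
  -- growth
  have ha0pos : 0 < a 0 := by rw [ha0]; exact hvolU0
  have hgrow := seq_growth_aux a c hc ha0pos (by rw [ha0]; exact ha1) hCS t
  rw [ha0] at hgrow
  -- final averaging
  have hbound : a t ≤ ∑ v ∈ U, d v * ∑ u ∈ U, |(M ^ t) v u| := by
    rw [ha_restrict t]
    apply Finset.sum_le_sum
    intro v hv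
    rw [Finset.mul_sum]
    apply Finset.sum_le_sum
    intro u hu
    calc σ v * σ u * (d v * (M ^ t) v u)
        ≤ |σ v * σ u * (d v * (M ^ t) v u)| := le_abs_self _
      _ = d v * |(M ^ t) v u| := by
          rw [abs_mul, abs_mul, abs_mul, hσabs v hv, hσabs u hu,
            abs_of_pos (hd0 v)]
          ring
  simp only [Matrix.single_vecMul, one_mul]
  by_contra hcon
  push_neg at hcon
  have hUne : U.Nonempty := by
    rw [Finset.nonempty_iff_ne_empty]
    intro hne
    rw [hvolU, hne, Finset.sum_empty] at hvolU0
    exact lt_irrefl 0 hvolU0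
  have hlt : ∑ v ∈ U, d v * ∑ u ∈ U, |(M ^ t) v u| < ∑ v ∈ U, d v * c ^ t := by
    apply Finset.sum_lt_sum_of_nonempty hUne
    intro v hv
    exact mul_lt_mul_of_pos_left (by simpa [Matrix.row] using hcon v hv) (hd0 v)
  have hsum : ∑ v ∈ U, d v * c ^ t = volU * c ^ t := by
    rw [← Finset.sum_mul, hvolU]
  rw [hc_def] at hgrow hlt hsum
  linarith
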